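/- For every x ∈ ℝ, the function z ↦ f_ι(z,x) is nonnegative on ℝ and satisfies ∫_ℝ f_ι(z,x) dz = 1; that is, f_ι(·,x) is a probability density (here the choice of h makes the total mass of the three pieces — a trapezoid of width ξ, a near-rectangle of width 1, and a triangle of width ι — equal to 1, and the constraint ξ < (2−ι)/(1+ι) guarantees h > ι so the density is nonnegative). -/

import Mathlib

open MeasureTheory Set

/-- The normalizing constant `h = (2 + ι + ι² − ξ)/(2 + ξ + ι)`. -/
noncomputable def hconst (ι ξ : ℝ) : ℝ := (2 + ι + ι ^ 2 - ξ) / (2 + ξ + ι)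

/-- The continuous-support signal density `f_ι(z,x)`: a trapezoid of width `ξ`,
a near-rectangle of width `1`, and a triangle of width `ι`. -/
noncomputable def fIota (ι ξ z x : ℝ) : ℝ :=
  if x ≤ z ∧ z < x + ξ then 1 - (z - x) * (1 - hconst ι ξ) / ξ
  else if x + ξ ≤ z ∧ z < x + ξ + 1 then hconst ι ξ - (z - x - ξ) * ι
  else if x + ξ + 1 ≤ z ∧ z ≤ x + ξ + 1 + ι then
    hconst ι ξ - ι - (z - x - ξ - 1) * (hconst ι ξ - ι) / ι
  else 0

private lemma integral_affine (a b A B : ℝ) :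
    ∫ z in a..b, (A + B * z) = A * (b - a) + B * (b ^ 2 - a ^ 2) / 2 := by
  rw [intervalIntegral.integral_add (g := fun z : ℝ => B * z) (intervalIntegrable_const)
      ((continuous_const.mul continuous_id').intervalIntegrable _ _ :
        IntervalIntegrable (fun z : ℝ => B * z) volume a b),
    intervalIntegral.integral_const_mul, integral_id, intervalIntegral.integral_const]
  simp; ring

private lemma integral_Ico_affine (a b A B : ℝ) (hab : a ≤ b) :
    ∫ z in Ico a b, (A + B * z) = A * (b - a) + B * (b ^ 2 - a ^ 2) / 2 := by
  rw [integral_Ico_eq_integral_Ioo, ← integral_Ioc_eq_integral_Ioo,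
    ← intervalIntegral.integral_of_le hab, integral_affine]

private lemma integral_Icc_affine (a b A B : ℝ) (hab : a ≤ b) :
    ∫ z in Icc a b, (A + B * z) = A * (b - a) + B * (b ^ 2 - a ^ 2) / 2 := by
  rw [integral_Icc_eq_integral_Ioc, ← intervalIntegral.integral_of_le hab, integral_affine]

/-- For `ι ∈ (0,1)` and `ξ ∈ [1, (2−ι)/(1+ι))`, for every `x`
the function `z ↦ f_ι(z,x)` is nonnegative on `ℝ` and integrates to `1`
(with respect to Lebesgue measure); that is, `f_ι(·,x)` is a probability
density. -/
theorem stmt_6 (ι ξ : ℝ) (hι : ι ∈ Ioo (0 : ℝ) 1)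
    (hξ1 : 1 ≤ ξ) (hξ2 : ξ < (2 - ι) / (1 + ι)) :
    ∀ x : ℝ, (∀ z : ℝ, 0 ≤ fIota ι ξ z x) ∧ (∫ z, fIota ι ξ z x) = 1 := by
  obtain ⟨hι0, hι1⟩ := hι
  have hξ0 : (0 : ℝ) < ξ := lt_of_lt_of_le one_pos hξ1
  have hden : (0 : ℝ) < 2 + ξ + ι := by linarith
  have hξ2' : ξ * (1 + ι) < 2 - ι := by
    rw [lt_div_iff₀ (by linarith : (0:ℝ) < 1 + ι)] at hξ2; linarith
  set h := hconst ι ξ with hh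
  have hgtι : ι < h := by
    rw [hh, hconst, lt_div_iff₀ hden]; nlinarith
  have hle1 : h ≤ 1 := by
    rw [hh, hconst, div_le_one hden]; nlinarith
  have hpos : 0 < h := lt_trans hι0 hgtι
  intro x
  constructor
  · intro z
    unfold fIota
    rw [← hh]
    split_ifs with h1 h2 h3
    · obtain ⟨hz1, hz2⟩ := h1
      rw [sub_nonneg, div_le_one hξ0]; nlinarith
    · obtain ⟨hz1, hz2⟩ := h2
      nlinarith
    · obtain ⟨hz1, hz2⟩ := h3
      have : h - ι - (z - x - ξ - 1) * (h - ι) / ι = (h - ι) * ((x + ξ + 1 + ι) - z) / ι := by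
        field_simp; ring
      rw [this]
      apply div_nonneg (mul_nonneg (by linarith) (by linarith)) hι0.le
    · exact le_refl 0
  · have hξne : ξ ≠ 0 := ne_of_gt hξ0
    have hιne : ι ≠ 0 := ne_of_gt hι0
    set F1 : ℝ → ℝ := fun z => (1 + x * (1 - h) / ξ) + (-(1 - h) / ξ) * z with hF1
    set F2 : ℝ → ℝ := fun z => (h + (x + ξ) * ι) + (-ι) * z with hF2
    set F3 : ℝ → ℝ := fun z => (h - ι + (x + ξ + 1) * (h - ι) / ι) + (-(h - ι) / ι) * z with hF3
    have hdecomp : ∀ z : ℝ, fIota ι ξ z x =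
        (Ico x (x + ξ)).indicator F1 z
        + (Ico (x + ξ) (x + ξ + 1)).indicator F2 z
        + (Icc (x + ξ + 1) (x + ξ + 1 + ι)).indicator F3 z := by
      intro z
      simp only [indicator_apply, mem_Ico, mem_Icc, fIota, ← hh, hF1, hF2, hF3]
      by_cases h1 : x ≤ z ∧ z < x + ξ
      · have n2 : ¬(x + ξ ≤ z ∧ z < x + ξ + 1) := by rintro ⟨a, b⟩; linarith [h1.2]
        have n3 : ¬(x + ξ + 1 ≤ z ∧ z ≤ x + ξ + 1 + ι) := by rintro ⟨a, b⟩; linarith [h1.2]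
        rw [if_pos h1, if_pos h1, if_neg n2, if_neg n3]
        field_simp; ring
      · rw [if_neg h1, if_neg h1]
        by_cases h2 : x + ξ ≤ z ∧ z < x + ξ + 1
        · have n3 : ¬(x + ξ + 1 ≤ z ∧ z ≤ x + ξ + 1 + ι) := by rintro ⟨a, b⟩; linarith [h2.2]
          rw [if_pos h2, if_pos h2, if_neg n3]
          ring
        · rw [if_neg h2, if_neg h2]
          by_cases h3 : x + ξ + 1 ≤ z ∧ z ≤ x + ξ + 1 + ι
          · rw [if_pos h3, if_pos h3]
            field_simp; ring
          · rw [if_neg h3, if_neg h3]; ring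
    have c1 : Continuous F1 := by fun_prop
    have c2 : Continuous F2 := by fun_prop
    have c3 : Continuous F3 := by fun_prop
    have i1 : Integrable ((Ico x (x + ξ)).indicator F1) := by
      rw [integrable_indicator_iff measurableSet_Ico]
      exact (c1.integrableOn_Icc).mono_set Ico_subset_Icc_self
    have i2 : Integrable ((Ico (x + ξ) (x + ξ + 1)).indicator F2) := by
      rw [integrable_indicator_iff measurableSet_Ico]
      exact (c2.integrableOn_Icc).mono_set Ico_subset_Icc_self
    have i3 : Integrable ((Icc (x + ξ + 1) (x + ξ + 1 + ι)).indicator F3) := by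
      rw [integrable_indicator_iff measurableSet_Icc]
      exact c3.integrableOn_Icc
    have hfun : (fun z => fIota ι ξ z x) = fun z =>
        (Ico x (x + ξ)).indicator F1 z + (Ico (x + ξ) (x + ξ + 1)).indicator F2 z
          + (Icc (x + ξ + 1) (x + ξ + 1 + ι)).indicator F3 z := funext hdecomp
    have i12 : Integrable (fun z => (Ico x (x + ξ)).indicator F1 z
        + (Ico (x + ξ) (x + ξ + 1)).indicator F2 z) := i1.add i2
    rw [hfun, integral_add i12 i3, integral_add i1 i2, integral_indicator measurableSet_Ico, integral_indicator measurableSet_Ico,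
      integral_indicator measurableSet_Icc, hF1, hF2, hF3,
      integral_Ico_affine _ _ _ _ (by linarith), integral_Ico_affine _ _ _ _ (by linarith),
      integral_Icc_affine _ _ _ _ (by linarith), hh, hconst]
    field_simp
    ring
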